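/- There is a unique ℤ_[2]-algebra homomorphism σ : R → R with σ(a₁) = −a₁, σ(a₃) = −a₃, and σ(a₆) = a₆; it satisfies σ ∘ σ = id, and its fixed subring {r ∈ R : σ(r) = r} equals the ℤ_[2]-subalgebra of R generated by a₁², a₁·a₃, a₃², and a₆. (This computes the degree-zero group cohomology of the deck transformation of the double cover 𝒴 → 𝒳ᴰ acting on automorphic forms.) -/

import Mathlib

open MvPolynomial

noncomputable section

/-- `c = a₁⁶ + a₁³a₃ + a₃²` in `P = ℤ_[2][a₁, a₃, a₆]` (with `X 0 = a₁`, `X 1 = a₃`, `X 2 = a₆`). -/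
def cpoly : MvPolynomial (Fin 3) ℤ_[2] := (X 0) ^ 6 + (X 0) ^ 3 * X 1 + (X 1) ^ 2

/-- `f = a₆² + a₆·c + c² − (5/9)·a₁⁶·c` in `P`. -/
def fpoly : MvPolynomial (Fin 3) ℤ_[2] :=
  (X 2) ^ 2 + X 2 * cpoly + cpoly ^ 2 - C (5 * Ring.inverse 9) * (X 0) ^ 6 * cpoly

/-- `R = P/(f)`, the ring of automorphic forms on the double cover `𝒴`. -/
abbrev RD : Type := MvPolynomial (Fin 3) ℤ_[2] ⧸ Ideal.span {fpoly}

/-- The image of `a₁` in `R`. -/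
def b₁ : RD := Ideal.Quotient.mk _ (X 0)
/-- The image of `a₃` in `R`. -/
def b₃ : RD := Ideal.Quotient.mk _ (X 1)
/-- The image of `a₆` in `R`. -/
def b₆ : RD := Ideal.Quotient.mk _ (X 2)



def tau : MvPolynomial (Fin 3) ℤ_[2] →ₐ[ℤ_[2]] MvPolynomial (Fin 3) ℤ_[2] :=
  aeval ![-X 0, -X 1, X 2]

lemma tau_X0 : tau (X 0) = -X 0 := by simp [tau]
lemma tau_X1 : tau (X 1) = -X 1 := by simp [tau]
lemma tau_X2 : tau (X 2) = X 2 := by simp [tau]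
lemma tau_C (r : ℤ_[2]) : tau (C r) = C r := by simp [tau, algebraMap_eq]

lemma tau_c : tau cpoly = cpoly := by
  simp only [cpoly, map_add, map_mul, map_pow, tau_X0, tau_X1]
  ring

lemma tau_f : tau fpoly = fpoly := by
  simp only [fpoly, map_sub, map_add, map_mul, map_pow, tau_X0, tau_X1, tau_X2, tau_c, tau_C]
  ring

/-- The even subalgebra of `P`. -/
def Aev : Subalgebra ℤ_[2] (MvPolynomial (Fin 3) ℤ_[2]) :=
  Algebra.adjoin ℤ_[2] ({X 0 ^ 2, X 0 * X 1, X 1 ^ 2, X 2} : Set (MvPolynomial (Fin 3) ℤ_[2]))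

lemma X00_mem : (X 0 ^ 2 : MvPolynomial (Fin 3) ℤ_[2]) ∈ Aev :=
  Algebra.subset_adjoin (by simp)
lemma X01_mem : (X 0 * X 1 : MvPolynomial (Fin 3) ℤ_[2]) ∈ Aev :=
  Algebra.subset_adjoin (by simp)
lemma X11_mem : (X 1 ^ 2 : MvPolynomial (Fin 3) ℤ_[2]) ∈ Aev :=
  Algebra.subset_adjoin (by simp)
lemma X2_mem : (X 2 : MvPolynomial (Fin 3) ℤ_[2]) ∈ Aev :=
  Algebra.subset_adjoin (by simp)

lemma tau_fix_Aev {x : MvPolynomial (Fin 3) ℤ_[2]} (hx : x ∈ Aev) : tau x = x := by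
  have : Aev ≤ AlgHom.equalizer tau (AlgHom.id ℤ_[2] _) := by
    rw [Aev, Algebra.adjoin_le_iff]
    rintro y (rfl | rfl | rfl | rfl) <;>
      simp [AlgHom.mem_equalizer, map_pow, map_mul, tau_X0, tau_X1, tau_X2]
  exact this hx

/-- parity decomposition -/
lemma decomp (p : MvPolynomial (Fin 3) ℤ_[2]) :
    ∃ pe q0 q1 : MvPolynomial (Fin 3) ℤ_[2],
      pe ∈ Aev ∧ q0 ∈ Aev ∧ q1 ∈ Aev ∧ p = pe + X 0 * q0 + X 1 * q1 := by
  induction p using MvPolynomial.induction_on with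
  | C a =>
      exact ⟨C a, 0, 0, by simpa [algebraMap_eq] using (Aev.algebraMap_mem a),
        Aev.zero_mem, Aev.zero_mem, by ring⟩
  | add p q hp hq =>
      obtain ⟨pe, p0, p1, hpe, hp0, hp1, rfl⟩ := hp
      obtain ⟨qe, q0, q1, hqe, hq0, hq1, rfl⟩ := hq
      exact ⟨pe + qe, p0 + q0, p1 + q1, Aev.add_mem hpe hqe, Aev.add_mem hp0 hq0,
        Aev.add_mem hp1 hq1, by ring⟩
  | mul_X p i hp =>
      obtain ⟨pe, q0, q1, hpe, hq0, hq1, rfl⟩ := hp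
      fin_cases i <;> simp only [Fin.zero_eta, Fin.mk_one, Fin.reduceFinMk, Fin.isValue]
      · exact ⟨X 0 ^ 2 * q0 + (X 0 * X 1) * q1, pe, 0,
          Aev.add_mem (Aev.mul_mem X00_mem hq0) (Aev.mul_mem X01_mem hq1), hpe,
          Aev.zero_mem, by ring⟩
      · exact ⟨(X 0 * X 1) * q0 + X 1 ^ 2 * q1, 0, pe,
          Aev.add_mem (Aev.mul_mem X01_mem hq0) (Aev.mul_mem X11_mem hq1),
          Aev.zero_mem, hpe, by ring⟩
      · exact ⟨pe * X 2, q0 * X 2, q1 * X 2, Aev.mul_mem hpe X2_mem,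
          Aev.mul_mem hq0 X2_mem, Aev.mul_mem hq1 X2_mem, by ring⟩

lemma phi_f_ne : MvPolynomial.map (PadicInt.toZMod : ℤ_[2] →+* ZMod 2) fpoly ≠ 0 := by
  intro h
  have h1 := congrArg (eval ![0, 0, 1]) h
  simp [fpoly, cpoly, eval_map] at h1

lemma two_ne : (2 : MvPolynomial (Fin 3) ℤ_[2]) ≠ 0 := by
  rw [show (2 : MvPolynomial (Fin 3) ℤ_[2]) = C 2 from (map_ofNat _ _).symm, Ne, C_eq_zero]
  norm_num

lemma half (q : MvPolynomial (Fin 3) ℤ_[2]) (h : fpoly ∣ 2 * q) : fpoly ∣ q := by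
  obtain ⟨g, hg⟩ := h
  have h2z : (2 : MvPolynomial (Fin 3) (ZMod 2)) = 0 := by
    rw [show (2 : MvPolynomial (Fin 3) (ZMod 2)) = C 2 from (map_ofNat _ _).symm,
      show (2 : ZMod 2) = 0 from rfl, map_zero]
  have h0 : MvPolynomial.map (PadicInt.toZMod : ℤ_[2] →+* ZMod 2) fpoly *
      MvPolynomial.map (PadicInt.toZMod : ℤ_[2] →+* ZMod 2) g = 0 := by
    rw [← map_mul, ← hg, map_mul, map_ofNat, h2z, zero_mul]
  have hg0 : g ∈ RingHom.ker (MvPolynomial.map (PadicInt.toZMod : ℤ_[2] →+* ZMod 2)) :=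
    (mul_eq_zero.mp h0).resolve_left phi_f_ne
  rw [MvPolynomial.ker_map, PadicInt.ker_toZMod, PadicInt.maximalIdeal_eq_span_p,
    Ideal.map_span, Set.image_singleton] at hg0
  obtain ⟨h', rfl⟩ := Ideal.mem_span_singleton.mp hg0
  have hc : (C ((2:ℕ) : ℤ_[2]) : MvPolynomial (Fin 3) ℤ_[2]) = 2 := by
    push_cast
    exact map_ofNat _ _
  refine ⟨h', mul_left_cancel₀ (two_ne) ?_⟩
  rw [hg, hc]
  ring

lemma sigma_comp_mk (σ : RD →ₐ[ℤ_[2]] RD) (h1 : σ b₁ = -b₁) (h3 : σ b₃ = -b₃)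
    (h6 : σ b₆ = b₆) :
    σ.comp (Ideal.Quotient.mkₐ ℤ_[2] (Ideal.span {fpoly})) =
      (Ideal.Quotient.mkₐ ℤ_[2] (Ideal.span {fpoly})).comp tau := by
  apply MvPolynomial.algHom_ext
  intro i
  fin_cases i <;>
    simp only [AlgHom.comp_apply, Ideal.Quotient.mkₐ_eq_mk, Fin.zero_eta, Fin.mk_one,
      Fin.reduceFinMk, Fin.isValue, tau_X0, tau_X1, tau_X2, map_neg]
  · exact h1
  · exact h3
  · exact h6

lemma mk_tau (σ : RD →ₐ[ℤ_[2]] RD) (h1 : σ b₁ = -b₁) (h3 : σ b₃ = -b₃) (h6 : σ b₆ = b₆)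
    (p : MvPolynomial (Fin 3) ℤ_[2]) :
    σ (Ideal.Quotient.mk (Ideal.span {fpoly}) p) =
      Ideal.Quotient.mk (Ideal.span {fpoly}) (tau p) := by
  have := DFunLike.congr_fun (sigma_comp_mk σ h1 h3 h6) p
  simpa using this

/-- the deck transformation -/
def sig0 : RD →ₐ[ℤ_[2]] RD :=
  Ideal.Quotient.liftₐ (Ideal.span {fpoly})
    ((Ideal.Quotient.mkₐ ℤ_[2] (Ideal.span {fpoly})).comp tau)
    (by
      intro a ha
      obtain ⟨g, rfl⟩ := Ideal.mem_span_singleton.mp ha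
      simp only [AlgHom.comp_apply, map_mul, tau_f, Ideal.Quotient.mkₐ_eq_mk]
      rw [← map_mul, Ideal.Quotient.eq_zero_iff_mem]
      exact Ideal.mem_span_singleton.mpr ⟨tau g, rfl⟩)

lemma sig0_mk (p : MvPolynomial (Fin 3) ℤ_[2]) :
    sig0 (Ideal.Quotient.mk (Ideal.span {fpoly}) p) =
      Ideal.Quotient.mk (Ideal.span {fpoly}) (tau p) := by
  simp [sig0, Ideal.Quotient.liftₐ_apply, Ideal.Quotient.lift_mk]
  exact Ideal.Quotient.lift_mk _ _ _

lemma sig0_props : sig0 b₁ = -b₁ ∧ sig0 b₃ = -b₃ ∧ sig0 b₆ = b₆ := by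
  refine ⟨?_, ?_, ?_⟩
  · rw [show b₁ = Ideal.Quotient.mk (Ideal.span {fpoly}) (X 0) from rfl, sig0_mk, tau_X0, RingHom.map_neg]
  · rw [show b₃ = Ideal.Quotient.mk (Ideal.span {fpoly}) (X 1) from rfl, sig0_mk, tau_X1, RingHom.map_neg]
  · rw [show b₆ = Ideal.Quotient.mk (Ideal.span {fpoly}) (X 2) from rfl, sig0_mk, tau_X2]

lemma adjoin_eq : (Aev.map (Ideal.Quotient.mkₐ ℤ_[2] (Ideal.span {fpoly}))) =
    Algebra.adjoin ℤ_[2] ({b₁ ^ 2, b₁ * b₃, b₃ ^ 2, b₆} : Set RD) := by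
  rw [Aev, AlgHom.map_adjoin]
  congr 1
  simp only [Set.image_insert_eq, Set.image_singleton, Ideal.Quotient.mkₐ_eq_mk, map_pow,
    map_mul]
  rfl

lemma fixed_iff (σ : RD →ₐ[ℤ_[2]] RD) (h1 : σ b₁ = -b₁) (h3 : σ b₃ = -b₃) (h6 : σ b₆ = b₆)
    (r : RD) :
    σ r = r ↔ r ∈ Algebra.adjoin ℤ_[2] ({b₁ ^ 2, b₁ * b₃, b₃ ^ 2, b₆} : Set RD) := by
  constructor
  · intro hr
    obtain ⟨p, rfl⟩ := Ideal.Quotient.mk_surjective r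
    obtain ⟨pe, q0, q1, hpe, hq0, hq1, rfl⟩ := decomp p
    rw [mk_tau σ h1 h3 h6] at hr
    have htau : tau (pe + X 0 * q0 + X 1 * q1) = pe - X 0 * q0 - X 1 * q1 := by
      simp only [map_add, map_mul, tau_X0, tau_X1, tau_fix_Aev hpe, tau_fix_Aev hq0,
        tau_fix_Aev hq1]
      ring
    have hdvd : fpoly ∣ 2 * (X 0 * q0 + X 1 * q1) := by
      have hmem := Ideal.Quotient.eq.mp hr
      rw [htau, show (pe - X 0*q0 - X 1*q1) - (pe + X 0 * q0 + X 1 * q1) =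
        -(2*(X 0 * q0 + X 1 * q1)) by ring] at hmem
      exact dvd_neg.mp (Ideal.mem_span_singleton.mp hmem)
    obtain ⟨h', hh⟩ := half _ hdvd
    have hq : Ideal.Quotient.mk (Ideal.span {fpoly}) (pe + X 0 * q0 + X 1 * q1) =
        Ideal.Quotient.mk (Ideal.span {fpoly}) pe := by
      rw [Ideal.Quotient.eq, show (pe + X 0 * q0 + X 1 * q1) - pe = fpoly * h' by
        rw [← hh]; ring]
      exact Ideal.mem_span_singleton.mpr ⟨h', rfl⟩
    rw [hq, ← adjoin_eq]
    exact Subalgebra.mem_map.mpr ⟨pe, hpe, rfl⟩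
  · intro hr
    have hle : Algebra.adjoin ℤ_[2] ({b₁ ^ 2, b₁ * b₃, b₃ ^ 2, b₆} : Set RD) ≤
        AlgHom.equalizer σ (AlgHom.id ℤ_[2] RD) := by
      rw [Algebra.adjoin_le_iff]
      rintro y (rfl | rfl | rfl | rfl) <;>
        simp only [SetLike.mem_coe, AlgHom.mem_equalizer, AlgHom.id_apply, map_pow, map_mul, h1, h3, h6] <;>
        ring
    exact hle hr


/-- There is a unique `ℤ_[2]`-algebra homomorphism `σ : R → R` with
`σ(a₁) = −a₁`, `σ(a₃) = −a₃`, `σ(a₆) = a₆`; it is an involution and its fixed subring is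
the `ℤ_[2]`-subalgebra generated by `a₁², a₁a₃, a₃², a₆`.  (Deck transformation of the
double cover `𝒴 → 𝒳ᴰ` acting on automorphic forms.) -/
theorem deck_involution_and_invariants :
    (∃! σ : RD →ₐ[ℤ_[2]] RD, σ b₁ = -b₁ ∧ σ b₃ = -b₃ ∧ σ b₆ = b₆) ∧
    ∀ σ : RD →ₐ[ℤ_[2]] RD, σ b₁ = -b₁ → σ b₃ = -b₃ → σ b₆ = b₆ →
      σ.comp σ = AlgHom.id ℤ_[2] RD ∧
      ∀ r : RD, σ r = r ↔
        r ∈ Algebra.adjoin ℤ_[2] ({b₁ ^ 2, b₁ * b₃, b₃ ^ 2, b₆} : Set RD) := by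
  constructor
  · refine ⟨sig0, sig0_props, ?_⟩
    rintro σ' ⟨h1, h3, h6⟩
    apply Ideal.Quotient.algHom_ext
    rw [sigma_comp_mk σ' h1 h3 h6,
      sigma_comp_mk sig0 sig0_props.1 sig0_props.2.1 sig0_props.2.2]
  · intro σ h1 h3 h6
    constructor
    · apply Ideal.Quotient.algHom_ext
      apply MvPolynomial.algHom_ext
      intro i
      fin_cases i <;>
        simp only [AlgHom.comp_apply, Ideal.Quotient.mkₐ_eq_mk, AlgHom.id_apply,
          Fin.zero_eta, Fin.mk_one, Fin.reduceFinMk, Fin.isValue]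
      · rw [show (Ideal.Quotient.mk (Ideal.span {fpoly})) (X 0) = b₁ from rfl, h1,
          map_neg, h1, neg_neg]
      · rw [show (Ideal.Quotient.mk (Ideal.span {fpoly})) (X 1) = b₃ from rfl, h3,
          map_neg, h3, neg_neg]
      · rw [show (Ideal.Quotient.mk (Ideal.span {fpoly})) (X 2) = b₆ from rfl, h6, h6]
    · exact fixed_iff σ h1 h3 h6
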